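/- arXiv:2605.00588 — 3 statements merged into one kernel-verified Lean document; each statement's English description precedes it below -/
import Mathlib

section
/- Let N ∈ ℕ, T ∈ ℕ, and for each agent i ∈ {1,…,N} let n_i ∈ ℕ, r_i ∈ ℝ^{n_i}, A_i ∈ ℝ^{T×n_i}, Π_i ∈ ℝ^{T×T}, and let p, y ∈ ℝ^T. Set d = Σ_i n_i, let Ω ⊆ ℝ^d be a nonempty closed convex set, and define the pseudo-gradient F(x; y) ∈ ℝ^d as the block vector whose i-th block is ∇_{x_i} J_i(x_i; y) = 2(x_i − r_i) + A_iᵀ Π_iᵀ (p + y), where J_i(x_i; y) = ‖x_i − r_i‖² + (p + y)ᵀ Π_i A_i x_i. Then the solution set SOL(F(·; y), Ω) of the variational inequality is a singleton, namely SOL(F(·; y), Ω) = { proj_Ω(a(y)) }, where a(y) ∈ ℝ^d is the block vector whose i-th block is r_i − (1/2) A_iᵀ Π_iᵀ (p + y); in particular, a(y) is an affine function of y. -/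
open Matrix
open scoped RealInnerProductSpace

/-- `x` is the Euclidean projection of `w` onto `C`: it belongs to `C` and minimizes
the distance to `w` among points of `C`. -/
def IsProjOn {E : Type*} [NormedAddCommGroup E] (C : Set E) (w x : E) : Prop :=
  x ∈ C ∧ ∀ z ∈ C, ‖w - x‖ ≤ ‖w - z‖

/-- the solution set of the variational inequality `VI(F(·; y), Ω)`, where
`F` is the pseudo-gradient of the game (`i`-th block `2(xᵢ − rᵢ) + Aᵢᵀ Πᵢᵀ (p + y)`),
is a singleton: it equals `{proj_Ω(a(y))}`, where the `i`-th block of `a(y)` is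
`rᵢ − (1/2) Aᵢᵀ Πᵢᵀ (p + y)` (an affine function of `y`). Blocks are encoded via the
sigma type `(i : Fin N) × Fin (n i)`, so that `ℝ^d` with `d = Σᵢ nᵢ` is
`EuclideanSpace ℝ ((i : Fin N) × Fin (n i))`. -/
theorem vi_solution_singleton (N T : ℕ) (n : Fin N → ℕ)
    (r : (i : Fin N) → Fin (n i) → ℝ)
    (A : (i : Fin N) → Matrix (Fin T) (Fin (n i)) ℝ)
    (Pi : (i : Fin N) → Matrix (Fin T) (Fin T) ℝ)
    (p y : Fin T → ℝ)
    (Ω : Set (EuclideanSpace ℝ ((i : Fin N) × Fin (n i))))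
    (hne : Ω.Nonempty) (hcl : IsClosed Ω) (hconv : Convex ℝ Ω)
    (F : EuclideanSpace ℝ ((i : Fin N) × Fin (n i)) →
      EuclideanSpace ℝ ((i : Fin N) × Fin (n i)))
    (hF : ∀ x ij, F x ij =
      2 * (x ij - r ij.1 ij.2) + (((A ij.1)ᵀ) *ᵥ (((Pi ij.1)ᵀ) *ᵥ (p + y))) ij.2)
    (a : EuclideanSpace ℝ ((i : Fin N) × Fin (n i)))
    (ha : ∀ ij, a ij =
      r ij.1 ij.2 - (1 / 2) * (((A ij.1)ᵀ) *ᵥ (((Pi ij.1)ᵀ) *ᵥ (p + y))) ij.2) :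
    ({x | x ∈ Ω ∧ ∀ z ∈ Ω, (0 : ℝ) ≤ ⟪F x, z - x⟫} = {x | IsProjOn Ω a x}) ∧
      (∃! x, IsProjOn Ω a x) := by
  have hbdd : ∀ w : EuclideanSpace ℝ ((i : Fin N) × Fin (n i)),
      BddBelow (Set.range fun v : Ω => ‖w - v‖) :=
    fun w => ⟨0, by rintro b ⟨v, rfl⟩; exact norm_nonneg _⟩
  -- F x = 2 • (x - a)
  have hFa : ∀ x : EuclideanSpace ℝ ((i : Fin N) × Fin (n i)),
      F x = (2 : ℝ) • (x - a) := by
    intro x; ext ij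
    have h1 := hF x ij
    have h2 := ha ij
    show F x ij = ((2 : ℝ) • (x - a)) ij
    simp only [PiLp.smul_apply, PiLp.sub_apply, smul_eq_mul, h1, h2]
    ring
  -- characterization of IsProjOn via inner products
  have hproj : ∀ x, IsProjOn Ω a x ↔ x ∈ Ω ∧ ∀ z ∈ Ω, ⟪a - x, z - x⟫ ≤ 0 := by
    intro x
    haveI : Nonempty Ω := hne.to_subtype
    constructor
    · rintro ⟨hx, hmin⟩
      refine ⟨hx, ?_⟩
      have heq : ‖a - x‖ = ⨅ w : Ω, ‖a - w‖ := by
        apply le_antisymm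
        · exact le_ciInf fun w => hmin w w.2
        · exact ciInf_le (hbdd a) (⟨x, hx⟩ : Ω)
      exact (norm_eq_iInf_iff_real_inner_le_zero hconv hx).mp heq
    · rintro ⟨hx, hinner⟩
      refine ⟨hx, fun z hz => ?_⟩
      have heq : ‖a - x‖ = ⨅ w : Ω, ‖a - w‖ :=
        (norm_eq_iInf_iff_real_inner_le_zero hconv hx).mpr hinner
      rw [heq]
      exact ciInf_le (hbdd a) (⟨z, hz⟩ : Ω)
  constructor
  · ext x
    simp only [Set.mem_setOf_eq, hproj]
    constructor
    · rintro ⟨hx, h⟩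
      refine ⟨hx, fun z hz => ?_⟩
      have := h z hz
      rw [hFa x, real_inner_smul_left] at this
      have h2 : (0 : ℝ) ≤ ⟪x - a, z - x⟫ := by linarith
      have h3 : ⟪a - x, z - x⟫ = -⟪x - a, z - x⟫ := by
        rw [show a - x = -(x - a) by abel, inner_neg_left]
      linarith
    · rintro ⟨hx, h⟩
      refine ⟨hx, fun z hz => ?_⟩
      have := h z hz
      have h3 : ⟪a - x, z - x⟫ = -⟪x - a, z - x⟫ := by
        rw [show a - x = -(x - a) by abel, inner_neg_left]
      rw [hFa x, real_inner_smul_left]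
      linarith
  · -- existence
    obtain ⟨v, hv, hveq⟩ :=
      exists_norm_eq_iInf_of_complete_convex hne hcl.isComplete hconv a
    refine ⟨v, ⟨hv, fun z hz => ?_⟩, ?_⟩
    · rw [hveq]; exact ciInf_le (hbdd a) (⟨z, hz⟩ : Ω)
    · -- uniqueness
      intro x hx
      obtain ⟨hxΩ, hxin⟩ := (hproj x).mp hx
      have hvin := ((hproj v).mp ⟨hv, fun z hz => by
        rw [hveq]; exact ciInf_le (hbdd a) (⟨z, hz⟩ : Ω)⟩).2
      have h1 := hxin v hv
      have h2 := hvin x hxΩ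
      have h3 : ⟪x - v, x - v⟫ ≤ 0 := by
        have e1 : ⟪x - v, x - v⟫ = ⟪a - v, x - v⟫ - ⟪a - x, x - v⟫ := by
          rw [← inner_sub_left]; congr 1; abel
        have e2 : ⟪a - x, x - v⟫ = -⟪a - x, v - x⟫ := by
          rw [show x - v = -(v - x) by abel, inner_neg_right]
        rw [e1, e2]; linarith
      have := real_inner_self_nonpos.mp h3
      have : x = v := by rwa [sub_eq_zero] at this
      exact this
end

section
/- Let T, d ∈ ℕ, L ≥ 0, ε ≥ 0, ρ > 0, and let J₀ : ℝ^T × ℝ^d → ℝ satisfy |J₀(y, x) − J₀(y, x′)| ≤ L‖x − x′‖ for all y ∈ ℝ^T and x, x′ ∈ ℝ^d (Lipschitz in the second argument, uniformly in the first). Let φ, φ̂ : ℝ^T → ℝ^d be maps with ‖φ(y) − φ̂(y)‖ ≤ ε for all y in the closed ball B(y_k, ρ) around a point y_k ∈ ℝ^T. Suppose ŷ* minimizes y ↦ J₀(y, φ̂(y)) over B(y_k, ρ). Then J₀(ŷ*, φ(ŷ*)) ≤ J₀(y_k, φ(y_k)) + 2 L ε. -/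
/-- if `J₀(y, ·)` is `L`-Lipschitz uniformly in `y`, `φ` and `φ̂` are
`ε`-close on the trust region `B(y_k, ρ)`, and `ŷ*` minimizes `y ↦ J₀(y, φ̂(y))` over
`B(y_k, ρ)`, then `J₀(ŷ*, φ(ŷ*)) ≤ J₀(y_k, φ(y_k)) + 2Lε`. -/
theorem surrogate_minimizer_bound (T d : ℕ) (L ε ρ : ℝ)
    (hL : 0 ≤ L) (hε : 0 ≤ ε) (hρ : 0 < ρ)
    (J₀ : EuclideanSpace ℝ (Fin T) → EuclideanSpace ℝ (Fin d) → ℝ)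
    (hJ₀ : ∀ (y : EuclideanSpace ℝ (Fin T)) (x x' : EuclideanSpace ℝ (Fin d)),
      |J₀ y x - J₀ y x'| ≤ L * ‖x - x'‖)
    (φ φhat : EuclideanSpace ℝ (Fin T) → EuclideanSpace ℝ (Fin d))
    (yk : EuclideanSpace ℝ (Fin T))
    (hclose : ∀ y ∈ Metric.closedBall yk ρ, ‖φ y - φhat y‖ ≤ ε)
    (yhat : EuclideanSpace ℝ (Fin T))
    (hyhat_mem : yhat ∈ Metric.closedBall yk ρ)
    (hyhat_min : ∀ y ∈ Metric.closedBall yk ρ, J₀ yhat (φhat yhat) ≤ J₀ y (φhat y)) :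
    J₀ yhat (φ yhat) ≤ J₀ yk (φ yk) + 2 * L * ε := by
  have hk : yk ∈ Metric.closedBall yk ρ := Metric.mem_closedBall_self hρ.le
  have h1 : J₀ yhat (φ yhat) - J₀ yhat (φhat yhat) ≤ L * ε := by
    calc J₀ yhat (φ yhat) - J₀ yhat (φhat yhat)
        ≤ |J₀ yhat (φ yhat) - J₀ yhat (φhat yhat)| := le_abs_self _
      _ ≤ L * ‖φ yhat - φhat yhat‖ := hJ₀ _ _ _
      _ ≤ L * ε := mul_le_mul_of_nonneg_left (hclose _ hyhat_mem) hL
  have h2 : J₀ yhat (φhat yhat) ≤ J₀ yk (φhat yk) := hyhat_min _ hk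
  have h3 : J₀ yk (φhat yk) - J₀ yk (φ yk) ≤ L * ε := by
    calc J₀ yk (φhat yk) - J₀ yk (φ yk)
        ≤ |J₀ yk (φhat yk) - J₀ yk (φ yk)| := le_abs_self _
      _ = |J₀ yk (φ yk) - J₀ yk (φhat yk)| := by rw [abs_sub_comm]
      _ ≤ L * ‖φ yk - φhat yk‖ := hJ₀ _ _ _
      _ ≤ L * ε := mul_le_mul_of_nonneg_left (hclose _ hk) hL
  linarith
end

section
/- Let E be a finite-dimensional real inner product space, Z ⊆ E a nonempty set, g : E → ℝ any function, and p : E → ℝ a convex function that is differentiable at a point z_t ∈ Z. Suppose z_{t+1} ∈ Z minimizes the function z ↦ g(z) − ⟨∇p(z_t), z⟩ over Z. Then g(z_{t+1}) − p(z_{t+1}) ≤ g(z_t) − p(z_t), i.e., one iteration of the difference-of-convex (DCA) scheme does not increase the objective g − p. -/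
open scoped RealInnerProductSpace

open Filter Set Topology

lemma convex_gradient_ineq {E : Type*} [NormedAddCommGroup E] [InnerProductSpace ℝ E]
    [FiniteDimensional ℝ E]
    (p : E → ℝ) (hp : ConvexOn ℝ Set.univ p) (zt : E) (gp : E)
    (hgrad : HasGradientAt p gp zt) (z : E) :
    ⟪gp, z - zt⟫ ≤ p z - p zt := by
  set d := z - zt with hd
  have hline : HasDerivAt (fun t : ℝ => zt + t • d) d 0 := by
    simpa using (hasDerivAt_id (0:ℝ)).smul_const d |>.const_add zt
  have hφ : HasDerivAt (fun t : ℝ => p (zt + t • d)) ⟪gp, d⟫ 0 := by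
    have := HasFDerivAt.comp_hasDerivAt 0 (by simpa using hgrad.hasFDerivAt :
      HasFDerivAt p ((InnerProductSpace.toDual ℝ E) gp) (zt + (0:ℝ) • d)) hline
    simpa [Function.comp_def] using this
  have hslope : Tendsto (slope (fun t : ℝ => p (zt + t • d)) 0) (𝓝[>] 0) (𝓝 ⟪gp, d⟫) :=
    (hasDerivAt_iff_tendsto_slope.mp hφ).mono_left
      (nhdsWithin_mono _ (fun x hx => ne_of_gt hx))
  refine le_of_tendsto hslope ?_
  filter_upwards [Ioo_mem_nhdsGT (zero_lt_one)] with t ht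
  have ht0 : (0:ℝ) < t := ht.1
  have ht1 : t < 1 := ht.2
  have hc := hp.2 (mem_univ zt) (mem_univ z) (by linarith : (0:ℝ) ≤ 1 - t)
    (le_of_lt ht0) (by ring)
  have key : p (zt + t • d) ≤ (1 - t) * p zt + t * p z := by
    have : zt + t • d = (1 - t) • zt + t • z := by
      rw [hd]; module
    rw [this]; simpa using hc
  simp only [slope_def_field, zero_smul, add_zero, sub_zero]
  rw [div_le_iff₀ ht0]
  nlinarith [key]

/-- one iteration of the difference-of-convex (DCA) scheme does not
increase the objective `g − p`: if `p` is convex and differentiable at `z_t ∈ Z`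
with gradient `gp`, and `z_{t+1} ∈ Z` minimizes `z ↦ g(z) − ⟨gp, z⟩` over `Z`,
then `g(z_{t+1}) − p(z_{t+1}) ≤ g(z_t) − p(z_t)`. -/
theorem dca_step_monotone {E : Type*} [NormedAddCommGroup E] [InnerProductSpace ℝ E]
    [FiniteDimensional ℝ E]
    (Z : Set E) (hZ : Z.Nonempty) (g p : E → ℝ)
    (hp : ConvexOn ℝ Set.univ p)
    (zt : E) (hzt : zt ∈ Z) (gp : E) (hgrad : HasGradientAt p gp zt)
    (zt1 : E) (hzt1 : zt1 ∈ Z)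
    (hmin : ∀ z ∈ Z, g zt1 - ⟪gp, zt1⟫ ≤ g z - ⟪gp, z⟫) :
    g zt1 - p zt1 ≤ g zt - p zt := by
  have h1 := hmin zt hzt
  have h2 := convex_gradient_ineq p hp zt gp hgrad zt1
  rw [inner_sub_right] at h2
  linarith
end
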